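/- With identical doctor preferences, the k most commonly preferred hospitals receive the same partner under Int-DA as under deferred acceptance on the full preferences. Precisely: let (H,D,U) be a market with |D| = |H| = n, every pair mutually acceptable, and all doctors inducing the same ordinal ranking of hospitals; label the hospitals h_1, …, h_n in decreasing order of this common preference, and let 1 ≤ k ≤ n. Let μ̂ be any (k,k)-pairwise-stable interview schedule, μ^I the doctor-optimal stable matching of the interview-truncated market, and μ^DA the doctor-optimal stable matching of the original market. Then for every r ≤ k, μ^DA(h_r) = μ^I(h_r). -/

import Mathlib

open Finset

/-- A market: finite sets of doctors `D` and hospitals `H`, utilities for each side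
(including the outside option `oD d = u_d(d)`, `oH h = u_h(h)`), with strict preferences. -/
structure Market (D H : Type*) where
  uD : D → H → ℝ
  oD : D → ℝ
  uH : H → D → ℝ
  oH : H → ℝ
  injD : ∀ d, Function.Injective fun x : Option H => x.elim (oD d) (uD d)
  injH : ∀ h, Function.Injective fun x : Option D => x.elim (oH h) (uH h)

variable {D H : Type*}

/-- Utility of a doctor for a potential partner (`none` = staying unmatched). -/
def Market.valD (M : Market D H) (d : D) (x : Option H) : ℝ := x.elim (M.oD d) (M.uD d)

/-- Utility of a hospital for a potential partner (`none` = staying unmatched). -/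
def Market.valH (M : Market D H) (h : H) (x : Option D) : ℝ := x.elim (M.oH h) (M.uH h)

/-- A (one-to-one) matching between doctors and hospitals. -/
structure Matching (D H : Type*) where
  mD : D → Option H
  mH : H → Option D
  consistent : ∀ d h, mD d = some h ↔ mH h = some d

/-- Stability: individual rationality plus no blocking pair. -/
def Stable (M : Market D H) (μ : Matching D H) : Prop :=
  (∀ d, M.valD d (μ.mD d) ≥ M.oD d) ∧ (∀ h, M.valH h (μ.mH h) ≥ M.oH h) ∧
    ¬ ∃ (d : D) (h : H), M.uD d h > M.valD d (μ.mD d) ∧ M.uH h d > M.valH h (μ.mH h)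

/-- Doctor-optimal stable matching. -/
def DoctorOptimal (M : Market D H) (μ : Matching D H) : Prop :=
  Stable M μ ∧ ∀ μ' : Matching D H, Stable M μ' → ∀ d, M.valD d (μ.mD d) ≥ M.valD d (μ'.mD d)

/-- Rank-order of a potential partner `x` in doctor `d`'s actual preference over `H ∪ {d}`:
one plus the number of alternatives strictly preferred to `x`. -/
noncomputable def rankD [Fintype H] (M : Market D H) (d : D) (x : Option H) : ℕ :=
  1 + (univ.filter fun h' : H => M.uD d h' > M.valD d x).card
    + (if M.oD d > M.valD d x then 1 else 0)

/-- An interview schedule (a many-to-many matching). -/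
structure ISched (D H : Type*) where
  iD : D → Finset H
  iH : H → Finset D
  mem_iff : ∀ d h, h ∈ iD d ↔ d ∈ iH h

/-- `(k,k')`-pairwise stability of an interview schedule. -/
def PairwiseStable (M : Market D H) (k k' : ℕ) (s : ISched D H) : Prop :=
  (∀ d, (s.iD d).card ≤ k ∧ ∀ h ∈ s.iD d, M.uD d h > M.oD d) ∧
  (∀ h, (s.iH h).card ≤ k' ∧ ∀ d ∈ s.iH h, M.uH h d > M.oH h) ∧
  ¬ ∃ (d : D) (h : H), d ∉ s.iH h ∧
      ((∃ h' ∈ s.iD d, M.uD d h > M.uD d h') ∨ (M.uD d h > M.oD d ∧ (s.iD d).card < k)) ∧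
      ((∃ d' ∈ s.iH h, M.uH h d > M.uH h d') ∨ (M.uH h d > M.oH h ∧ (s.iH h).card < k'))

/-- Stability of a matching for the interview-truncated market: only interview partners can be
matched, individual rationality, and no blocking pair among mutually interviewed pairs. -/
def TruncStable (M : Market D H) (s : ISched D H) (μ : Matching D H) : Prop :=
  (∀ d h, μ.mD d = some h → h ∈ s.iD d) ∧
  (∀ d, M.valD d (μ.mD d) ≥ M.oD d) ∧ (∀ h, M.valH h (μ.mH h) ≥ M.oH h) ∧
    ¬ ∃ (d : D) (h : H), h ∈ s.iD d ∧
        M.uD d h > M.valD d (μ.mD d) ∧ M.uH h d > M.valH h (μ.mH h)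

/-- Doctor-optimal stable matching of the interview-truncated market. -/
def TruncDoctorOptimal (M : Market D H) (s : ISched D H) (μ : Matching D H) : Prop :=
  TruncStable M s μ ∧
    ∀ μ' : Matching D H, TruncStable M s μ' → ∀ d, M.valD d (μ.mD d) ≥ M.valD d (μ'.mD d)

/-- Rank-order of a potential partner `x` in doctor `d`'s interview-truncated preference:
one plus the number of alternatives in `μ̂(d) ∪ {d}` strictly preferred to `x`. -/
noncomputable def rankTruncD (M : Market D H) (s : ISched D H) (d : D) (x : Option H) : ℕ :=
  1 + ((s.iD d).filter fun h' : H => M.uD d h' > M.valD d x).card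
    + (if M.oD d > M.valD d x then 1 else 0)

/-- All doctors induce the same ordinal ranking of the hospitals. -/
def CommonDocPrefs (M : Market D H) : Prop :=
  ∀ d d' h h', M.uD d h > M.uD d h' ↔ M.uD d' h > M.uD d' h'

/-- Every doctor–hospital pair is mutually acceptable. -/
def AllAcceptable (M : Market D H) : Prop :=
  ∀ d h, M.uD d h > M.oD d ∧ M.uH h d > M.oH h

/-- with identical doctor preferences, the `k` most commonly preferred
hospitals receive the same partner under Int-DA as under DA on the full preferences. -/
theorem top_hospitals_same_partner
    {D H : Type*} [Fintype D] [Fintype H]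
    (M : Market D H) (n : ℕ)
    (hD : Fintype.card D = n) (hH : Fintype.card H = n)
    (hacc : AllAcceptable M) (hcommon : CommonDocPrefs M)
    (e : Fin n ≃ H)
    (hdec : ∀ (d : D) (i j : Fin n), i < j → M.uD d (e i) > M.uD d (e j))
    (k : ℕ) (hk1 : 1 ≤ k) (hkn : k ≤ n)
    (s : ISched D H) (hs : PairwiseStable M k k s)
    (μI : Matching D H) (hI : TruncDoctorOptimal M s μI)
    (μDA : Matching D H) (hDA : DoctorOptimal M μDA) :
    ∀ r : Fin n, (r : ℕ) < k → μDA.mH (e r) = μI.mH (e r) := by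
  classical
  have hnpos : 0 < n := lt_of_lt_of_le hk1 hkn
  have hDne : Nonempty D := by
    rw [← Fintype.card_pos_iff, hD]; exact hnpos
  have key : ∀ r : ℕ, ∀ hr : r < n, ∃ dr : D,
      μDA.mH (e ⟨r, hr⟩) = some dr ∧ (r < k → μI.mH (e ⟨r, hr⟩) = some dr) := by
    intro r
    induction r using Nat.strong_induction_on with
    | _ r IH =>
    intro hr
    have hG : ∀ i : ℕ, ∃ di : D, ∀ hi : i < n, i < r →
        μDA.mH (e ⟨i, hi⟩) = some di ∧ (i < k → μI.mH (e ⟨i, hi⟩) = some di) := by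
      intro i
      by_cases hir : i < r
      · obtain ⟨di, h1, h2⟩ := IH i hir (lt_trans hir hr)
        exact ⟨di, fun hi _ => ⟨h1, h2⟩⟩
      · exact ⟨Classical.arbitrary D, fun _ hh => absurd hh hir⟩
    choose g hg using hG
    set hR : H := e ⟨r, hr⟩ with hhR
    set S : Finset D := Finset.univ \ (Finset.range r).image g with hS
    have hSne : S.Nonempty := by
      have h1 : ((Finset.range r).image g).card ≤ r :=
        le_trans Finset.card_image_le (by simp)
      have h2 : S.card = Fintype.card D - ((Finset.range r).image g).card := by
        rw [hS, Finset.card_sdiff_of_subset (Finset.subset_univ _), Finset.card_univ]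
      rw [← Finset.card_pos, h2, hD]
      omega
    obtain ⟨dr, hdrS, hdrmax⟩ := S.exists_max_image (M.uH hR) hSne
    have hdrnot : dr ∉ (Finset.range r).image g := (Finset.mem_sdiff.mp hdrS).2
    -- membership criterion for S
    have memS : ∀ d : D, (∀ i, i < r → d ≠ g i) → d ∈ S := by
      intro d hd
      rw [hS, Finset.mem_sdiff]
      refine ⟨Finset.mem_univ _, ?_⟩
      rw [Finset.mem_image]
      rintro ⟨i, hi, rfl⟩
      rw [Finset.mem_range] at hi
      exact hd i hi rfl
    -- the partner (in either matching) of hR lies in S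
    have hAgen : ∀ (μ : Matching D H),
        (∀ i (hi : i < n), i < r → μ.mH (e ⟨i, hi⟩) = some (g i)) →
        ∀ d, μ.mD d = some hR → d ∈ S := by
      intro μ hμ d hd
      apply memS
      intro i hi hdg
      have hin : i < n := lt_trans hi hr
      have h1 := hμ i hin hi
      have h2 := (μ.consistent (g i) (e ⟨i, hin⟩)).2 h1
      rw [hdg] at hd
      rw [hd] at h2
      have h3 : hR = e ⟨i, hin⟩ := Option.some_inj.mp h2
      have h4 : (⟨r, hr⟩ : Fin n) = ⟨i, hin⟩ := e.injective (by rw [← hhR]; exact h3)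
      have : r = i := by simpa using congrArg Fin.val h4
      omega
    -- dr is not matched to a better hospital
    have hBgen : ∀ (μ : Matching D H),
        (∀ i (hi : i < n), i < r → μ.mH (e ⟨i, hi⟩) = some (g i)) →
        ∀ i (hi : i < n), i < r → μ.mD dr ≠ some (e ⟨i, hi⟩) := by
      intro μ hμ i hi hir hmd
      have h2 := (μ.consistent dr (e ⟨i, hi⟩)).1 hmd
      rw [hμ i hi hir] at h2
      exact hdrnot (Finset.mem_image.mpr
        ⟨i, Finset.mem_range.mpr hir, Option.some_inj.mp h2⟩)
    -- doctor side of the blocking pair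
    have hdside : ∀ (μ : Matching D H),
        (∀ i (hi : i < n), i < r → μ.mH (e ⟨i, hi⟩) = some (g i)) →
        μ.mD dr ≠ some hR → M.uD dr hR > M.valD dr (μ.mD dr) := by
      intro μ hμ hne
      cases hmd : μ.mD dr with
      | none => exact (hacc dr hR).1
      | some h =>
        rcases lt_trichotomy ((e.symm h : ℕ)) r with hlt | heq | hgt
        · exfalso
          apply hBgen μ hμ (e.symm h : ℕ) (e.symm h).2 hlt
          rw [hmd]
          exact congrArg some (e.apply_symm_apply h).symm
        · exfalso
          apply hne
          rw [hmd]
          have hfin : e.symm h = (⟨r, hr⟩ : Fin n) := Fin.ext heq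
          have : h = hR := by
            rw [← e.apply_symm_apply h, hfin, ← hhR]
          rw [this]
        · have hlt2 : (⟨r, hr⟩ : Fin n) < e.symm h := hgt
          have hh := hdec dr ⟨r, hr⟩ (e.symm h) hlt2
          rw [e.apply_symm_apply] at hh
          rw [← hhR] at hh
          exact hh
    -- hospital side of the blocking pair
    have hhside : ∀ (μ : Matching D H),
        (∀ i (hi : i < n), i < r → μ.mH (e ⟨i, hi⟩) = some (g i)) →
        μ.mD dr ≠ some hR → M.uH hR dr > M.valH hR (μ.mH hR) := by
      intro μ hμ hne
      cases hmh : μ.mH hR with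
      | none => exact (hacc dr hR).2
      | some d =>
        have hdS : d ∈ S := hAgen μ hμ d ((μ.consistent d hR).2 hmh)
        have hdd : d ≠ dr := by
          rintro rfl
          exact hne ((μ.consistent d hR).2 hmh)
        have hle : M.uH hR d ≤ M.uH hR dr := hdrmax d hdS
        have hne2 : M.uH hR d ≠ M.uH hR dr := by
          intro hcontra
          have : (some d : Option D) = some dr := M.injH hR hcontra
          exact hdd (Option.some_inj.mp this)
        exact lt_of_le_of_ne hle hne2
    -- μDA matches hR with dr
    have hDAr : μDA.mH hR = some dr := by
      by_contra hcon
      have hne : μDA.mD dr ≠ some hR := fun hh => hcon ((μDA.consistent dr hR).1 hh)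
      have hμ : ∀ i (hi : i < n), i < r → μDA.mH (e ⟨i, hi⟩) = some (g i) :=
        fun i hi hir => (hg i hi hir).1
      exact hDA.1.2.2 ⟨dr, hR, hdside μDA hμ hne, hhside μDA hμ hne⟩
    refine ⟨dr, hDAr, ?_⟩
    intro hrk
    obtain ⟨hsD, hsH, hsNB⟩ := hs
    -- schedule structure at hR : anyone not interviewed is beaten by all interviewees
    have hiHfull : ∀ d, d ∉ s.iH hR →
        ((s.iH hR).card = k ∧ ∀ d' ∈ s.iH hR, M.uH hR d' > M.uH hR d) := by
      intro d hd
      have hds : (∃ h' ∈ s.iD d, M.uD d hR > M.uD d h') ∨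
          (M.uD d hR > M.oD d ∧ (s.iD d).card < k) := by
        by_cases hcard : (s.iD d).card < k
        · exact Or.inr ⟨(hacc d hR).1, hcard⟩
        · have hck : (s.iD d).card = k := le_antisymm (hsD d).1 (not_lt.mp hcard)
          have hT : ((s.iD d).filter fun h' => ((e.symm h' : ℕ)) < r).card ≤
              (Finset.range r).card := by
            apply Finset.card_le_card_of_injOn (fun h' => ((e.symm h' : ℕ)))
            · intro x hx
              rw [Finset.mem_coe, Finset.mem_filter] at hx
              exact Finset.mem_range.mpr hx.2
            · intro x _ y _ hxy
              exact e.symm.injective (Fin.val_injective hxy)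
          rw [Finset.card_range] at hT
          have hTlt : ((s.iD d).filter fun h' => ((e.symm h' : ℕ)) < r).card <
              (s.iD d).card := by omega
          have hss : ((s.iD d).filter fun h' => ((e.symm h' : ℕ)) < r) ⊂ s.iD d := by
            refine (Finset.filter_subset _ _).ssubset_of_ne ?_
            intro hceq
            rw [hceq] at hTlt
            exact lt_irrefl _ hTlt
          obtain ⟨h', hh'mem, hh'not⟩ := Finset.exists_of_ssubset hss
          have hge : r ≤ (e.symm h' : ℕ) := by
            by_contra hcc
            exact hh'not (Finset.mem_filter.mpr ⟨hh'mem, not_le.mp hcc⟩)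
          have hneq : (e.symm h' : ℕ) ≠ r := by
            intro hc
            have hfin : e.symm h' = (⟨r, hr⟩ : Fin n) := Fin.ext hc
            have : h' = hR := by
              rw [← e.apply_symm_apply h', hfin, ← hhR]
            rw [this] at hh'mem
            exact hd ((s.mem_iff d hR).mp hh'mem)
          have hgt : (⟨r, hr⟩ : Fin n) < e.symm h' := by
            have : r < (e.symm h' : ℕ) := by omega
            exact this
          have hh := hdec d ⟨r, hr⟩ (e.symm h') hgt
          rw [e.apply_symm_apply, ← hhR] at hh
          exact Or.inl ⟨h', hh'mem, hh⟩
      have hHS : ¬ ((∃ d' ∈ s.iH hR, M.uH hR d > M.uH hR d') ∨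
          (M.uH hR d > M.oH hR ∧ (s.iH hR).card < k)) := by
        intro hHS
        exact hsNB ⟨d, hR, hd, hds, hHS⟩
      have h1 : ∀ d' ∈ s.iH hR, ¬ M.uH hR d > M.uH hR d' :=
        fun d' hd' hh => hHS (Or.inl ⟨d', hd', hh⟩)
      have hcardH : (s.iH hR).card = k := by
        refine le_antisymm (hsH hR).1 (not_lt.mp fun hh => hHS (Or.inr ⟨(hacc d hR).2, hh⟩))
      refine ⟨hcardH, ?_⟩
      intro d' hd'
      have hne2 : d ≠ d' := by
        rintro rfl
        exact hd hd'
      have hne3 : M.uH hR d ≠ M.uH hR d' := by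
        intro hcontra
        have : (some d : Option D) = some d' := M.injH hR hcontra
        exact hne2 (Option.some_inj.mp this)
      exact lt_of_le_of_ne (not_lt.mp (h1 d' hd')) hne3
    -- dr is interviewed by hR
    have hdrIH : dr ∈ s.iH hR := by
      by_contra hnot
      obtain ⟨hcardH, hbeat⟩ := hiHfull dr hnot
      have hsub : s.iH hR ⊆ (Finset.range r).image g := by
        intro d' hd'
        by_contra hd'img
        have hd'S : d' ∈ S := Finset.mem_sdiff.mpr ⟨Finset.mem_univ _, hd'img⟩
        exact absurd (hdrmax d' hd'S) (not_le.mpr (hbeat d' hd'))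
      have hc1 := Finset.card_le_card hsub
      rw [hcardH] at hc1
      have hc2 : ((Finset.range r).image g).card ≤ r :=
        le_trans Finset.card_image_le (by simp)
      omega
    -- μI matches hR with dr
    by_contra hcon
    have hμ' : ∀ i (hi : i < n), i < r → μI.mH (e ⟨i, hi⟩) = some (g i) :=
      fun i hi hir => (hg i hi hir).2 (lt_trans hir hrk)
    have hne : μI.mD dr ≠ some hR := fun hh => hcon ((μI.consistent dr hR).1 hh)
    exact hI.1.2.2.2 ⟨dr, hR, (s.mem_iff dr hR).mpr hdrIH,
      hdside μI hμ' hne, hhside μI hμ' hne⟩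
  intro r hrk
  obtain ⟨dr, h1, h2⟩ := key (r : ℕ) r.2
  exact h1.trans (h2 hrk).symm
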